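/- Let A be an associative algebra over an infinite field k and let a_1, …, a_m ∈ A. Then the subspace k a_1 + … + k a_m is algebraic of bounded degree (there exists d ≥ 1 such that every element is algebraic of degree at most d) if and only if dim_k P_{≥1}(a_1,…,a_m) < ∞. -/

import Mathlib

/-- `pWord a i` is the polynomial `p_{i_1,…,i_m}(a_1,…,a_m)`: the sum, over all distinct
words in `m` letters containing exactly `i_j` occurrences of letter `j` for each `j`,
of the corresponding products of `a_1,…,a_m`. -/
noncomputable def pWord {A : Type*} [Ring A] {m : ℕ} (a : Fin m → A) (i : Fin m → ℕ) : A :=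
  ∑ w ∈ (Finset.univ : Finset (Fin (∑ j, i j) → Fin m)).filter
      (fun w => ∀ j, (List.ofFn w).count j = i j),
    ((List.ofFn w).map a).prod

/-- `Pdeg k a n` is `P_n(a_1,…,a_m)`, the `k`-span of
`{p_{i_1,…,i_m}(a_1,…,a_m) : i_1+…+i_m = n}`. -/
noncomputable def Pdeg (k : Type*) [Field k] {A : Type*} [Ring A] [Algebra k A]
    {m : ℕ} (a : Fin m → A) (n : ℕ) : Submodule k A :=
  Submodule.span k {x | ∃ i : Fin m → ℕ, (∑ j, i j) = n ∧ x = pWord a i}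

lemma pWord_eq {A : Type*} [Ring A] {m : ℕ} (a : Fin m → A) {i : Fin m → ℕ} {n : ℕ}
    (h : (∑ j, i j) = n) :
    pWord a i = ∑ w ∈ (Finset.univ : Finset (Fin n → Fin m)).filter
      (fun w => ∀ j, (List.ofFn w).count j = i j),
    ((List.ofFn w).map a).prod := by
  subst h; rfl

lemma sum_count_ofFn {m n : ℕ} (w : Fin n → Fin m) :
    ∑ j, (List.ofFn w).count j = n := by
  have : ∑ j, (List.ofFn w).count j = Multiset.card (↑(List.ofFn w) : Multiset (Fin m)) := by
    rw [← Multiset.sum_count_eq_card (s := Finset.univ) (fun a _ => Finset.mem_univ a)]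
    simp
  simpa using this

lemma prod_map_count {m : ℕ} {M : Type*} [CommMonoid M] (c : Fin m → M) (l : List (Fin m)) :
    (l.map c).prod = ∏ j, c j ^ l.count j := by
  rw [Finset.prod_list_map_count]
  apply Finset.prod_subset (Finset.subset_univ _)
  intro x _ hx
  rw [List.count_eq_zero_of_not_mem (fun h => hx (List.mem_toFinset.2 h)), pow_zero]

lemma multinomial_raw {k : Type*} [Field k] {A : Type*} [Ring A] [Algebra k A]
    {m : ℕ} (a : Fin m → A) (c : Fin m → k) (n : ℕ) :
    (∑ j, c j • a j) ^ n =
      ∑ w : Fin n → Fin m, (∏ t, c (w t)) • ((List.ofFn w).map a).prod := by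
  induction n with
  | zero => simp
  | succ n ih =>
    rw [pow_succ', ih]
    rw [← (Fin.consEquiv (fun _ : Fin (n+1) => Fin m)).sum_comp]
    rw [Fintype.sum_prod_type]
    rw [Finset.sum_mul]
    refine Finset.sum_congr rfl fun j _ => ?_
    rw [Finset.mul_sum]
    refine Finset.sum_congr rfl fun w _ => ?_
    simp only [Fin.consEquiv_apply, List.ofFn_succ, Fin.cons_zero, Fin.cons_succ,
      Fin.prod_cons, List.map_cons, List.prod_cons]
    have h1 : ∀ x : Fin (n+1), c ((Fin.cons j w : Fin (n+1) → Fin m) x)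
        = (Fin.cons (c j) (c ∘ w) : Fin (n+1) → k) x :=
      fun x => congrFun (Fin.comp_cons c j w) x
    simp_rw [h1, Fin.prod_cons]
    rw [smul_mul_assoc, mul_smul_comm, smul_smul]
    simp [Function.comp]

lemma multinomial_grouped {k : Type*} [Field k] {A : Type*} [Ring A] [Algebra k A]
    {m : ℕ} (a : Fin m → A) (c : Fin m → k) (n : ℕ) :
    (∑ j, c j • a j) ^ n =
      ∑ i ∈ Finset.Nat.antidiagonalTuple m n, (∏ j, c j ^ i j) • pWord a i := by
  rw [multinomial_raw]
  rw [← Finset.sum_fiberwise_of_maps_to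
    (g := fun w : Fin n → Fin m => fun j => (List.ofFn w).count j)
    (t := Finset.Nat.antidiagonalTuple m n)
    (fun w _ => Finset.Nat.mem_antidiagonalTuple.2 (sum_count_ofFn w))]
  refine Finset.sum_congr rfl fun i hi => ?_
  have hin : (∑ j, i j) = n := Finset.Nat.mem_antidiagonalTuple.1 hi
  rw [pWord_eq a hin, Finset.smul_sum]
  refine Finset.sum_congr ?_ fun w hw => ?_
  · apply Finset.filter_congr
    intro w _
    simp [funext_iff]
  · have hw' : ∀ j, (List.ofFn w).count j = i j := (Finset.mem_filter.1 hw).2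
    congr 1
    have : (∏ t, c (w t)) = ((List.ofFn w).map c).prod := by
      rw [List.map_ofFn, List.prod_ofFn]; rfl
    rw [this, prod_map_count]
    exact Finset.prod_congr rfl fun j _ => by rw [hw' j]

lemma polar_core {k : Type*} [Field k] [Infinite k] {Q : Type*} [AddCommGroup Q] [Module k Q]
    {m : ℕ} (s : Finset (Fin m → ℕ)) (v : (Fin m → ℕ) → Q)
    (h : ∀ c : Fin m → k, ∑ i ∈ s, (∏ j, c j ^ i j) • v i = 0) :
    ∀ i ∈ s, v i = 0 := by
  intro i0 hi0
  rw [← Module.forall_dual_apply_eq_zero_iff k]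
  intro f
  set p : MvPolynomial (Fin m) k :=
    ∑ i ∈ s, MvPolynomial.monomial (Finsupp.equivFunOnFinite.symm i) (f (v i)) with hp
  have heval : ∀ c : Fin m → k, MvPolynomial.eval c p = 0 := by
    intro c
    rw [hp, map_sum]
    have : ∀ i ∈ s, MvPolynomial.eval c
        (MvPolynomial.monomial (Finsupp.equivFunOnFinite.symm i) (f (v i)))
        = (∏ j, c j ^ i j) * f (v i) := by
      intro i _
      rw [MvPolynomial.eval_monomial, mul_comm]
      congr 1
      rw [Finsupp.prod_fintype]
      · simp
      · intro j; exact pow_zero _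
    rw [Finset.sum_congr rfl this]
    have := congrArg f (h c)
    rw [map_sum, map_zero] at this
    simpa [mul_comm] using this
  have hp0 : p = 0 := by
    apply MvPolynomial.funext
    intro c; rw [heval c, map_zero]
  have := congrArg (MvPolynomial.coeff (Finsupp.equivFunOnFinite.symm i0)) hp0
  rw [hp, MvPolynomial.coeff_zero] at this
  rw [MvPolynomial.coeff_sum] at this
  rw [Finset.sum_eq_single i0] at this
  · rwa [MvPolynomial.coeff_monomial, if_pos rfl] at this
  · intro i his hne
    rw [MvPolynomial.coeff_monomial, if_neg]
    exact fun hh => hne (Finsupp.equivFunOnFinite.symm.injective hh)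
  · intro h'; exact absurd hi0 h'

lemma pow_mem_Pdeg {k : Type*} [Field k] {A : Type*} [Ring A] [Algebra k A]
    {m : ℕ} (a : Fin m → A) {u : A} (hu : u ∈ Submodule.span k (Set.range a)) (n : ℕ) :
    u ^ n ∈ Pdeg k a n := by
  obtain ⟨c, rfl⟩ := (Submodule.mem_span_range_iff_exists_fun k).1 hu
  rw [multinomial_grouped]
  apply Submodule.sum_mem
  intro i hi
  exact Submodule.smul_mem _ _ (Submodule.subset_span
    ⟨i, Finset.Nat.mem_antidiagonalTuple.1 hi, rfl⟩)

lemma pWord_mem_span_powers {k : Type*} [Field k] [Infinite k] {A : Type*} [Ring A]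
    [Algebra k A] {m : ℕ} (a : Fin m → A) {i : Fin m → ℕ} {n : ℕ} (hi : (∑ j, i j) = n) :
    pWord a i ∈ Submodule.span k
      {x | ∃ u ∈ Submodule.span k (Set.range a), x = u ^ n} := by
  set W := Submodule.span k {x | ∃ u ∈ Submodule.span k (Set.range a), x = u ^ n} with hW
  have key : ∀ i' ∈ Finset.Nat.antidiagonalTuple m n, W.mkQ (pWord a i') = 0 := by
    apply polar_core (k := k)
    intro c
    have : ∑ i' ∈ Finset.Nat.antidiagonalTuple m n,
        (∏ j, c j ^ i' j) • W.mkQ (pWord a i') = W.mkQ ((∑ j, c j • a j) ^ n) := by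
      rw [multinomial_grouped, map_sum]
      exact Finset.sum_congr rfl fun i' _ => (map_smul _ _ _).symm
    rw [this, Submodule.mkQ_apply, Submodule.Quotient.mk_eq_zero]
    refine Submodule.subset_span ⟨∑ j, c j • a j, ?_, rfl⟩
    exact Submodule.sum_mem _ fun j _ =>
      Submodule.smul_mem _ _ (Submodule.subset_span ⟨j, rfl⟩)
  have := key i (Finset.Nat.mem_antidiagonalTuple.2 hi)
  rwa [Submodule.mkQ_apply, Submodule.Quotient.mk_eq_zero] at this

/-- Over an infinite field `k`, the subspace `k a_1 + … + k a_m` is algebraic of bounded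
degree (there exists `d ≥ 1` such that every element is algebraic of degree at most `d`)
if and only if `dim_k P_{≥1}(a_1,…,a_m) < ∞`. -/
theorem algebraic_bounded_iff_finiteDimensional_Pge
    (k : Type*) [Field k] [Infinite k] (A : Type*) [Ring A] [Algebra k A]
    (m : ℕ) (a : Fin m → A) :
    (∃ d : ℕ, 1 ≤ d ∧ ∀ u ∈ Submodule.span k (Set.range a),
        u ^ d ∈ Submodule.span k ((fun i : ℕ => u ^ i) '' Set.Icc 1 (d - 1))) ↔
      FiniteDimensional k ↥(⨆ n ∈ Set.Ici 1, Pdeg k a n) := by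
  constructor
  · rintro ⟨d, hd, h⟩
    have step1 : ∀ u ∈ Submodule.span k (Set.range a), ∀ n, 1 ≤ n →
        u ^ n ∈ Submodule.span k ((fun i : ℕ => u ^ i) '' Set.Icc 1 (d - 1)) := by
      intro u hu n
      induction n using Nat.strong_induction_on with
      | _ n ih =>
        intro hn1
        by_cases hnd : n < d
        · exact Submodule.subset_span ⟨n, ⟨hn1, by omega⟩, rfl⟩
        · push_neg at hnd
          have hpow : u ^ n = u ^ (n - d) * u ^ d := by
            rw [← pow_add]; congr 1; omega
          rw [hpow]
          refine Submodule.span_induction ?_ ?_ ?_ ?_ (h u hu)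
          · rintro x ⟨r, ⟨hr1, hr2⟩, rfl⟩
            rw [← pow_add]
            exact ih (n - d + r) (by omega) (by omega)
          · rw [mul_zero]; exact Submodule.zero_mem _
          · intro x y _ _ hx hy; rw [mul_add]; exact Submodule.add_mem _ hx hy
          · intro r x _ hx; rw [mul_smul_comm]; exact Submodule.smul_mem _ _ hx
    haveI hfin : ∀ r : ℕ, FiniteDimensional k (Pdeg k a r) := by
      intro r
      have hset : {x | ∃ i : Fin m → ℕ, (∑ j, i j) = r ∧ x = pWord a i}
          = pWord a '' ((Finset.Nat.antidiagonalTuple m r : Finset _) : Set _) := by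
        ext x
        simp only [Set.mem_image, Finset.mem_coe,
          Finset.Nat.mem_antidiagonalTuple, Set.mem_setOf_eq]
        constructor
        · rintro ⟨i, h1, rfl⟩; exact ⟨i, h1, rfl⟩
        · rintro ⟨i, h1, rfl⟩; exact ⟨i, h1, rfl⟩
      rw [Pdeg, hset]
      exact FiniteDimensional.span_of_finite k
        ((Finset.Nat.antidiagonalTuple m r).finite_toSet.image _)
    have hFD : FiniteDimensional k ↥(⨆ r : Fin d, Pdeg k a (r : ℕ)) :=
      Submodule.finiteDimensional_iSup _
    apply Submodule.finiteDimensional_of_le (S₂ := ⨆ r : Fin d, Pdeg k a (r : ℕ))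
    apply iSup_le; intro n; apply iSup_le; intro hn
    rw [Pdeg]
    apply Submodule.span_le.2
    rintro x ⟨i, hi, rfl⟩
    refine Submodule.span_le.2 ?_ (pWord_mem_span_powers a hi)
    rintro y ⟨u, hu, rfl⟩
    refine Submodule.span_le.2 ?_ (step1 u hu n hn)
    rintro z ⟨r, ⟨hr1, hr2⟩, rfl⟩
    exact le_iSup (fun r : Fin d => Pdeg k a (r : ℕ)) ⟨r, by omega⟩
      (pow_mem_Pdeg a hu r)
  · intro hP
    set D := Module.finrank k ↥(⨆ n ∈ Set.Ici 1, Pdeg k a n) with hD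
    refine ⟨D + 1, by omega, ?_⟩
    intro u hu
    have hpow : ∀ n : ℕ, 1 ≤ n → u ^ n ∈ (⨆ n ∈ Set.Ici 1, Pdeg k a n) := by
      intro n hn
      have h1 : Pdeg k a n ≤ ⨆ n ∈ Set.Ici 1, Pdeg k a n :=
        le_iSup₂ (f := fun (n : ℕ) (_ : n ∈ Set.Ici 1) => Pdeg k a n) n hn
      exact h1 (pow_mem_Pdeg a hu n)
    set v : Fin (D + 1) → ↥(⨆ n ∈ Set.Ici 1, Pdeg k a n) :=
      fun i => ⟨u ^ ((i : ℕ) + 1), hpow _ (by omega)⟩ with hv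
    have hnli : ¬ LinearIndependent k v := by
      intro hli
      have := hli.fintype_card_le_finrank
      rw [Fintype.card_fin] at this
      omega
    obtain ⟨g, hg0, r0, hr0⟩ := Fintype.not_linearIndependent_iff.1 hnli
    classical
    have hgA : ∑ i : Fin (D+1), g i • u ^ ((i:ℕ)+1) = 0 := by
      have := congrArg (Subtype.val) hg0
      simpa [hv] using this
    set s := Finset.univ.filter (fun i : Fin (D+1) => g i ≠ 0) with hs
    have hsne : s.Nonempty := ⟨r0, by simp [hs, hr0]⟩
    set r := s.max' hsne with hr
    have hgr : g r ≠ 0 := (Finset.mem_filter.1 (s.max'_mem hsne)).2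
    have hmax : ∀ i, g i ≠ 0 → i ≤ r :=
      fun i hi => Finset.le_max' s i (Finset.mem_filter.2 ⟨Finset.mem_univ _, hi⟩)
    have claim1 : u ^ ((r:ℕ)+1) ∈
        Submodule.span k ((fun t : ℕ => u ^ t) '' Set.Icc 1 (r:ℕ)) := by
      have h2 := Finset.add_sum_erase Finset.univ
        (fun i : Fin (D+1) => g i • u ^ ((i:ℕ)+1)) (Finset.mem_univ r)
      have he : g r • u ^ ((r:ℕ)+1)
          = - ∑ i ∈ Finset.univ.erase r, g i • u ^ ((i:ℕ)+1) :=
        eq_neg_of_add_eq_zero_left (h2.trans hgA)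
      have hrw : u ^ ((r:ℕ)+1) = (g r)⁻¹ • (g r • u ^ ((r:ℕ)+1)) := (inv_smul_smul₀ hgr _).symm
      rw [hrw, he]
      refine Submodule.smul_mem _ _ (Submodule.neg_mem _ (Submodule.sum_mem _ ?_))
      intro i hi
      by_cases hgi : g i = 0
      · rw [hgi, zero_smul]; exact Submodule.zero_mem _
      · have hle : (i:ℕ) ≤ (r:ℕ) := hmax i hgi
        have hne : (i:ℕ) ≠ (r:ℕ) := fun hh => (Finset.ne_of_mem_erase hi) (Fin.ext hh)
        exact Submodule.smul_mem _ _
          (Submodule.subset_span ⟨(i:ℕ)+1, ⟨by omega, by omega⟩, rfl⟩)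
    have hrD : (r:ℕ) ≤ D := by omega
    have claim2 : u ^ (D+1) ∈
        Submodule.span k ((fun t : ℕ => u ^ t) '' Set.Icc 1 D) := by
      have hsplit : u ^ (D+1) = u ^ (D - (r:ℕ)) * u ^ ((r:ℕ)+1) := by
        rw [← pow_add]; congr 1; omega
      rw [hsplit]
      refine Submodule.span_induction ?_ ?_ ?_ ?_ claim1
      · rintro x ⟨t, ⟨ht1, ht2⟩, rfl⟩
        rw [← pow_add]
        exact Submodule.subset_span ⟨D - (r:ℕ) + t, ⟨by omega, by omega⟩, rfl⟩
      · rw [mul_zero]; exact Submodule.zero_mem _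
      · intro x y _ _ hx hy; rw [mul_add]; exact Submodule.add_mem _ hx hy
      · intro c x _ hx; rw [mul_smul_comm]; exact Submodule.smul_mem _ _ hx
    simpa using claim2
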